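/- If the rod is isotropic, i.e. B₁ = B₂ and H = J, then along any solution (m, n, e) of the magnetic rod equations the twist I₁ = m₃ (the third component of m) is constant in t. -/

import Mathlib

open Matrix Real

/-- If the rod is isotropic (`B₁ = B₂` and `H = J`), then along any
solution `(m, n, e)` of the magnetic rod equations the twist `I₁ = m₃` is constant in `t`. -/
theorem twist_conserved_of_isotropic
    (B₁ B₂ C H J K lam : ℝ)
    (hB₁ : 0 < B₁) (hB₂ : 0 < B₂) (hC : 0 < C) (hH : 0 < H) (hJ : 0 < J) (hK : 0 < K)
    (m n e : ℝ → Fin 3 → ℝ)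
    (hm : Differentiable ℝ m) (hn : Differentiable ℝ n) (he : Differentiable ℝ e)
    (u : ℝ → Fin 3 → ℝ) (hu : ∀ t, u t = ![m t 0 / B₁, m t 1 / B₂, m t 2 / C])
    (w : ℝ → Fin 3 → ℝ) (hw : ∀ t, w t = ![n t 0 / H, n t 1 / J, 1 + n t 2 / K])
    (heqm : ∀ t, deriv m t = m t ⨯₃ u t + n t ⨯₃ w t)
    (heqn : ∀ t, deriv n t = n t ⨯₃ u t + lam • (e t ⨯₃ w t))
    (heqe : ∀ t, deriv e t = e t ⨯₃ u t)
    (hiso₁ : B₁ = B₂) (hiso₂ : H = J) :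
    ∀ t, deriv (fun t => m t 2) t = 0 := by
  intro t
  have h1 : deriv (fun t => m t 2) t = deriv m t 2 := by
    exact (hasDerivAt_pi.mp ((hm t).hasDerivAt) 2).deriv
  rw [h1, heqm t, hu t, hw t]
  simp [crossProduct, Pi.add_apply]
  field_simp
  subst hiso₁ hiso₂
  ring
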